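/- arXiv:1810.10491 — 2 statements merged into one kernel-verified Lean document; each statement's English description precedes it below -/
import Mathlib

section
/- The rapidity function d_E(u, v) = tanh⁻¹‖(−u) ⊕_E v‖ is a metric on the open unit ball 𝔹 of ℝⁿ: it is nonnegative and vanishes exactly when u = v, it is symmetric, and it satisfies the triangle inequality. -/
open scoped RealInnerProductSpace

/-- The inverse hyperbolic tangent on `(-1, 1)`. -/
noncomputable def artanh (x : ℝ) : ℝ := (1 / 2) * Real.log ((1 + x) / (1 - x))

/-- The Lorentz factor `γ_u = 1/√(1 - ‖u‖²)`. -/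
noncomputable def lorentzGamma {n : ℕ} (u : EuclideanSpace ℝ (Fin n)) : ℝ :=
  1 / Real.sqrt (1 - ‖u‖ ^ 2)

/-- Einstein addition on the open unit ball of `ℝⁿ`. -/
noncomputable def einsteinAdd {n : ℕ} (u v : EuclideanSpace ℝ (Fin n)) :
    EuclideanSpace ℝ (Fin n) :=
  (1 / (1 + ⟪u, v⟫)) •
    (u + (1 / lorentzGamma u) • v +
      ((lorentzGamma u / (1 + lorentzGamma u)) * ⟪u, v⟫) • u)

/-- The gyroautomorphisms of the Einstein gyrogroup, via the gyrator identity
`gyr[u,v]w = ⊖(u ⊕ v) ⊕ (u ⊕ (v ⊕ w))`. -/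
noncomputable def einsteinGyr {n : ℕ} (u v w : EuclideanSpace ℝ (Fin n)) :
    EuclideanSpace ℝ (Fin n) :=
  einsteinAdd (-(einsteinAdd u v)) (einsteinAdd u (einsteinAdd v w))

/-! ### Auxiliary lemmas about `artanh` -/

lemma artanh_zero' : artanh 0 = 0 := by simp [artanh]

lemma ratio_pos' {x : ℝ} (h0 : 0 ≤ x) (h1 : x < 1) : (0:ℝ) < (1 + x) / (1 - x) :=
  div_pos (by linarith) (by linarith)

lemma artanh_nonneg' {x : ℝ} (h0 : 0 ≤ x) (h1 : x < 1) : 0 ≤ artanh x := by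
  have : (1:ℝ) ≤ (1 + x) / (1 - x) := by
    rw [le_div_iff₀ (by linarith)]; linarith
  have := Real.log_nonneg this
  unfold artanh; linarith

lemma artanh_mono' {x y : ℝ} (h0 : 0 ≤ x) (hxy : x ≤ y) (h1 : y < 1) :
    artanh x ≤ artanh y := by
  have hx1 : x < 1 := lt_of_le_of_lt hxy h1
  have h : (1 + x) / (1 - x) ≤ (1 + y) / (1 - y) := by
    rw [div_le_div_iff₀ (by linarith) (by linarith)]; nlinarith
  have := Real.log_le_log (ratio_pos' h0 hx1) h
  unfold artanh; linarith

lemma artanh_eq_zero_iff' {x : ℝ} (h0 : 0 ≤ x) (h1 : x < 1) :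
    artanh x = 0 ↔ x = 0 := by
  constructor
  · intro h
    have hlog : Real.log ((1 + x) / (1 - x)) = 0 := by unfold artanh at h; linarith
    have := Real.exp_log (ratio_pos' h0 h1)
    rw [hlog, Real.exp_zero] at this
    have hne : (1:ℝ) - x ≠ 0 := by linarith
    field_simp at this
    linarith
  · rintro rfl; exact artanh_zero'

lemma artanh_add' {x y : ℝ} (hx0 : 0 ≤ x) (hx1 : x < 1) (hy0 : 0 ≤ y) (hy1 : y < 1) :
    artanh x + artanh y = artanh ((x + y) / (1 + x * y)) := by
  have hxy : 0 < 1 + x * y := by nlinarith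
  have h1 : (1 + (x + y) / (1 + x * y)) = (1 + x) * (1 + y) / (1 + x * y) := by
    field_simp; ring
  have h2 : (1 - (x + y) / (1 + x * y)) = (1 - x) * (1 - y) / (1 + x * y) := by
    field_simp; ring
  have h3 : (1 + x) * (1 + y) / (1 + x * y) / ((1 - x) * (1 - y) / (1 + x * y))
      = ((1 + x) / (1 - x)) * ((1 + y) / (1 - y)) := by
    rw [div_div_div_cancel_right₀]
    · field_simp
    · exact ne_of_gt hxy
  unfold artanh
  rw [h1, h2, h3, Real.log_mul (ne_of_gt (ratio_pos' hx0 hx1)) (ne_of_gt (ratio_pos' hy0 hy1))]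
  ring

/-! ### The norm of `(-u) ⊕ v` -/

lemma inner_lt_one' {n : ℕ} {u v : EuclideanSpace ℝ (Fin n)} (hu : ‖u‖ < 1) (hv : ‖v‖ < 1) :
    |⟪u, v⟫| < 1 := by
  have h := abs_real_inner_le_norm u v
  nlinarith [norm_nonneg u, norm_nonneg v]

lemma norm_sq_einsteinAdd_neg {n : ℕ} (u v : EuclideanSpace ℝ (Fin n))
    (hu : ‖u‖ < 1) (hv : ‖v‖ < 1) :
    ‖einsteinAdd (-u) v‖ ^ 2 =
      1 - (1 - ‖u‖ ^ 2) * (1 - ‖v‖ ^ 2) / (1 - ⟪u, v⟫) ^ 2 := by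
  set a := ⟪u, v⟫ with ha
  have haabs : |a| < 1 := inner_lt_one' hu hv
  have ha1 : (0:ℝ) < 1 - a := by cases' abs_lt.mp haabs with h1 h2; linarith
  have ha1' : (1:ℝ) + -a ≠ 0 := by
    have := (abs_lt.mp haabs).2; intro h; linarith
  set s := Real.sqrt (1 - ‖u‖ ^ 2) with hsdef
  have hs2 : s ^ 2 = 1 - ‖u‖ ^ 2 := Real.sq_sqrt (by nlinarith [norm_nonneg u])
  have hs0 : 0 < s := Real.sqrt_pos.mpr (by nlinarith [norm_nonneg u])
  have h1s : (0:ℝ) < 1 + s := by linarith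
  have hgamma : lorentzGamma (-u) = 1 / s := by
    rw [lorentzGamma, norm_neg]
  have hinner : ⟪(-u : EuclideanSpace ℝ (Fin n)), v⟫ = -a := by
    rw [inner_neg_left]
  have key : einsteinAdd (-u) v =
      ((a / (1 + s) - 1) / (1 - a)) • u + (s / (1 - a)) • v := by
    rw [einsteinAdd, hgamma, hinner]
    match_scalars <;>
      field_simp [ha1', ne_of_gt hs0, ne_of_gt h1s, ne_of_gt ha1] <;> ring
  rw [key]
  have hexp : ‖((a / (1 + s) - 1) / (1 - a)) • u + (s / (1 - a)) • v‖ ^ 2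
      = ((a / (1 + s) - 1) / (1 - a))^2 * ‖u‖^2
        + 2 * (((a / (1 + s) - 1) / (1 - a)) * (s / (1 - a))) * a
        + (s / (1 - a))^2 * ‖v‖^2 := by
    rw [norm_add_sq_real, real_inner_smul_left, real_inner_smul_right, ← ha]
    simp only [norm_smul, Real.norm_eq_abs, mul_pow, sq_abs]
    ring
  rw [hexp]
  have hu2 : ‖u‖ ^ 2 = 1 - s ^ 2 := by rw [hs2]; ring
  rw [hu2]
  field_simp
  ring

/-! ### The Lorentz-factor quantity `gE` -/

noncomputable def gE {n : ℕ} (u v : EuclideanSpace ℝ (Fin n)) : ℝ :=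
  (1 - ⟪u, v⟫) / (Real.sqrt (1 - ‖u‖^2) * Real.sqrt (1 - ‖v‖^2))

lemma gE_one_le {n : ℕ} (u v : EuclideanSpace ℝ (Fin n)) (hu : ‖u‖ < 1) (hv : ‖v‖ < 1) :
    1 ≤ gE u v := by
  have hsu : (0:ℝ) < Real.sqrt (1 - ‖u‖^2) := Real.sqrt_pos.mpr (by nlinarith [norm_nonneg u])
  have hsv : (0:ℝ) < Real.sqrt (1 - ‖v‖^2) := Real.sqrt_pos.mpr (by nlinarith [norm_nonneg v])
  rw [gE, le_div_iff₀ (by positivity), one_mul]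
  have h1 : Real.sqrt (1 - ‖u‖^2) * Real.sqrt (1 - ‖v‖^2)
      = Real.sqrt ((1 - ‖u‖^2) * (1 - ‖v‖^2)) := (Real.sqrt_mul (by nlinarith [norm_nonneg u]) _).symm
  rw [h1]
  have h2 : (1 - ‖u‖^2) * (1 - ‖v‖^2) ≤ (1 - ⟪u,v⟫)^2 := by
    have h : ⟪u,v⟫ ≤ ‖u‖ * ‖v‖ := real_inner_le_norm u v
    nlinarith [sq_nonneg (‖u‖ - ‖v‖), norm_nonneg u, norm_nonneg v,
      mul_nonneg (sub_nonneg.2 h) (show (0:ℝ) ≤ 2-⟪u,v⟫-‖u‖*‖v‖ by nlinarith [norm_nonneg u, norm_nonneg v])]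
  calc Real.sqrt ((1 - ‖u‖^2) * (1 - ‖v‖^2)) ≤ Real.sqrt ((1 - ⟪u,v⟫)^2) :=
        Real.sqrt_le_sqrt h2
    _ = 1 - ⟪u,v⟫ := Real.sqrt_sq (by
        have := abs_real_inner_le_norm u v
        nlinarith [norm_nonneg u, norm_nonneg v, abs_nonneg ⟪u,v⟫, le_abs_self ⟪u,v⟫])

lemma normsq_gE {n : ℕ} (u v : EuclideanSpace ℝ (Fin n)) (hu : ‖u‖ < 1) (hv : ‖v‖ < 1) :
    ‖einsteinAdd (-u) v‖ ^ 2 = 1 - 1 / (gE u v)^2 := by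
  have hs : (Real.sqrt (1-‖u‖^2) * Real.sqrt (1-‖v‖^2))^2 = (1-‖u‖^2)*(1-‖v‖^2) := by
    rw [mul_pow, Real.sq_sqrt (by nlinarith [norm_nonneg u]),
      Real.sq_sqrt (by nlinarith [norm_nonneg v])]
  rw [norm_sq_einsteinAdd_neg u v hu hv, gE, div_pow, one_div, inv_div, hs]

lemma norm_lt_one_einsteinAdd {n : ℕ} (u v : EuclideanSpace ℝ (Fin n))
    (hu : ‖u‖ < 1) (hv : ‖v‖ < 1) : ‖einsteinAdd (-u) v‖ < 1 := by
  have hg := gE_one_le u v hu hv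
  have h := normsq_gE u v hu hv
  have hpos : 0 < 1 / (gE u v)^2 := by positivity
  nlinarith [norm_nonneg (einsteinAdd (-u) v)]

/-! ### Equality case -/

lemma sq_eq_imp' {n : ℕ} (u v : EuclideanSpace ℝ (Fin n)) (hu : ‖u‖ < 1) (hv : ‖v‖ < 1)
    (h : (1 - ⟪u, v⟫)^2 = (1 - ‖u‖^2) * (1 - ‖v‖^2)) : u = v := by
  have hcs : ⟪u,v⟫ ≤ ‖u‖ * ‖v‖ := real_inner_le_norm u v
  have hpq : ‖u‖ * ‖v‖ < 1 := by nlinarith [norm_nonneg u, norm_nonneg v]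
  have key : (‖u‖-‖v‖)^2 + (‖u‖*‖v‖-⟪u,v⟫)*(2-⟪u,v⟫-‖u‖*‖v‖) = 0 := by
    linear_combination h
  have h2 : (0:ℝ) < 2-⟪u,v⟫-‖u‖*‖v‖ := by nlinarith
  have h3 : ‖u‖*‖v‖-⟪u,v⟫ = 0 := by
    nlinarith [sq_nonneg (‖u‖-‖v‖), mul_nonneg (sub_nonneg.2 hcs) h2.le]
  have h5 : ‖u‖ = ‖v‖ := by nlinarith [sq_nonneg (‖u‖-‖v‖), mul_nonneg (sub_nonneg.2 hcs) h2.le]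
  have h6 : ‖u - v‖^2 = 0 := by
    rw [norm_sub_sq_real, h5]
    nlinarith
  have := pow_eq_zero_iff (n := 2) (by norm_num) |>.mp h6
  rw [norm_eq_zero] at this
  exact sub_eq_zero.mp this

/-! ### The Minkowski (reverse Cauchy–Schwarz) triangle inequality for `gE` -/

section helpers
variable {F : Type*} [NormedAddCommGroup F] [InnerProductSpace ℝ F]

lemma inner_comb (a b c d : ℝ) (x y z : F) :
    ⟪a•x - b•y, c•z - d•y⟫ = a*c*⟪x,z⟫ - a*d*⟪x,y⟫ - b*c*⟪y,z⟫ + b*d*⟪y,y⟫ := by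
  simp only [inner_sub_left, inner_sub_right, real_inner_smul_left, real_inner_smul_right]
  ring

lemma inner_comb_right (a b : ℝ) (x y v : F) :
    ⟪a•x - b•y, v⟫ = a*⟪x,v⟫ - b*⟪y,v⟫ := by
  simp only [inner_sub_left, real_inner_smul_left]

lemma norm_comb (a b : ℝ) (x y : F) :
    ‖a•x - b•y‖^2 = a^2*‖x‖^2 - 2*(a*b)*⟪x,y⟫ + b^2*‖y‖^2 := by
  rw [norm_sub_sq_real, real_inner_smul_left, real_inner_smul_right]
  simp only [norm_smul, Real.norm_eq_abs, mul_pow, sq_abs]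
  ring

end helpers

lemma mink {n : ℕ} (v : EuclideanSpace ℝ (Fin n)) (hv : ‖v‖ < 1)
    (xA xB : EuclideanSpace ℝ (Fin n)) (tA tB : ℝ)
    (hA : tA = ⟪xA, v⟫) (hB : tB = ⟪xB, v⟫) :
    (⟪xA, xB⟫ - tA * tB)^2 ≤ (‖xA‖^2 - tA^2) * (‖xB‖^2 - tB^2) := by
  have pos : ∀ x : EuclideanSpace ℝ (Fin n), 0 ≤ ‖x‖^2 - ⟪x, v⟫^2 := by
    intro x
    have h1 := abs_real_inner_le_norm x v
    have h2 : ⟪x,v⟫^2 ≤ (‖x‖*‖v‖)^2 := by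
      nlinarith [abs_nonneg ⟪x,v⟫, sq_abs ⟪x,v⟫]
    have h3 : (‖x‖*‖v‖)^2 ≤ ‖x‖^2 := by
      have := mul_nonneg (sq_nonneg ‖x‖) (show (0:ℝ) ≤ 1 - ‖v‖^2 by nlinarith [norm_nonneg v])
      nlinarith
    linarith
  have quad : ∀ r : ℝ, 0 ≤ (‖xB‖^2 - tB^2) * (r*r) + (2*(⟪xA,xB⟫ - tA*tB)) * r
      + (‖xA‖^2 - tA^2) := by
    intro r
    have h := pos (xA + r • xB)
    have e1 : ‖xA + r • xB‖^2 = ‖xA‖^2 + 2*r*⟪xA,xB⟫ + r^2*‖xB‖^2 := by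
      rw [norm_add_sq_real, real_inner_smul_right]
      simp only [norm_smul, Real.norm_eq_abs, mul_pow, sq_abs]
      ring
    have e2 : ⟪xA + r • xB, v⟫ = tA + r * tB := by
      rw [inner_add_left, real_inner_smul_left, hA, hB]
    rw [e1, e2] at h
    nlinarith [h]
  have hd := discrim_le_zero quad
  rw [discrim] at hd
  nlinarith [hd]

set_option maxHeartbeats 1000000 in
lemma cosh_tri {n : ℕ} (u v w : EuclideanSpace ℝ (Fin n))
    (hu : ‖u‖ < 1) (hv : ‖v‖ < 1) (hw : ‖w‖ < 1) :
    gE u w ≤ gE u v * gE v w +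
      Real.sqrt ((gE u v)^2 - 1) * Real.sqrt ((gE v w)^2 - 1) := by
  set su := Real.sqrt (1 - ‖u‖^2) with hsu_def
  set sv := Real.sqrt (1 - ‖v‖^2) with hsv_def
  set sw := Real.sqrt (1 - ‖w‖^2) with hsw_def
  have hsu : 0 < su := Real.sqrt_pos.mpr (by nlinarith [norm_nonneg u])
  have hsv : 0 < sv := Real.sqrt_pos.mpr (by nlinarith [norm_nonneg v])
  have hsw : 0 < sw := Real.sqrt_pos.mpr (by nlinarith [norm_nonneg w])
  have hsu2 : su^2 = 1 - ‖u‖^2 := Real.sq_sqrt (by nlinarith [norm_nonneg u])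
  have hsv2 : sv^2 = 1 - ‖v‖^2 := Real.sq_sqrt (by nlinarith [norm_nonneg v])
  have hsw2 : sw^2 = 1 - ‖w‖^2 := Real.sq_sqrt (by nlinarith [norm_nonneg w])
  have hnu : ‖u‖^2 = 1 - su^2 := by linarith
  have hnv : ‖v‖^2 = 1 - sv^2 := by linarith
  have hnw : ‖w‖^2 = 1 - sw^2 := by linarith
  set g1 := gE u v with hg1
  set g2 := gE v w with hg2
  set g3 := gE u w with hg3
  have hA : (1/su - g1 * (1/sv)) = ⟪(1/su) • u - (g1 * (1/sv)) • v, v⟫ := by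
    rw [inner_comb_right, real_inner_self_eq_norm_sq, hg1, gE, ← hsu_def, ← hsv_def, hnv]
    field_simp
    ring
  have hB : (1/sw - g2 * (1/sv)) = ⟪(1/sw) • w - (g2 * (1/sv)) • v, v⟫ := by
    rw [inner_comb_right, real_inner_self_eq_norm_sq, hg2, gE, ← hsv_def, ← hsw_def, hnv,
      real_inner_comm w v]
    field_simp
    ring
  have hQA : ‖(1/su) • u - (g1 * (1/sv)) • v‖^2 - (1/su - g1 * (1/sv))^2 = g1^2 - 1 := by
    rw [norm_comb, hg1, gE, ← hsu_def, ← hsv_def, hnu, hnv]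
    field_simp
    ring
  have hQB : ‖(1/sw) • w - (g2 * (1/sv)) • v‖^2 - (1/sw - g2 * (1/sv))^2 = g2^2 - 1 := by
    rw [norm_comb, real_inner_comm v w, hg2, gE, ← hsv_def, ← hsw_def, hnv, hnw]
    field_simp
    ring
  have hQAB : ⟪(1/su) • u - (g1 * (1/sv)) • v, (1/sw) • w - (g2 * (1/sv)) • v⟫
      - (1/su - g1 * (1/sv)) * (1/sw - g2 * (1/sv)) = g1 * g2 - g3 := by
    rw [inner_comb, real_inner_self_eq_norm_sq, hg1, hg2, hg3, gE, gE, gE,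
      ← hsu_def, ← hsv_def, ← hsw_def, hnv]
    field_simp
    ring
  have hcs := mink v hv ((1/su) • u - (g1 * (1/sv)) • v) ((1/sw) • w - (g2 * (1/sv)) • v)
    (1/su - g1 * (1/sv)) (1/sw - g2 * (1/sv)) hA hB
  rw [hQA, hQB, hQAB] at hcs
  have hg1' : 1 ≤ g1 := gE_one_le u v hu hv
  have hg2' : 1 ≤ g2 := gE_one_le v w hv hw
  rcases le_or_gt g3 (g1 * g2) with h | h
  · have : 0 ≤ Real.sqrt (g1^2 - 1) * Real.sqrt (g2^2 - 1) := by positivity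
    linarith
  · have h6 : g3 - g1 * g2 ≤ Real.sqrt ((g1^2 - 1) * (g2^2 - 1)) := by
      rw [← Real.sqrt_sq (by linarith : (0:ℝ) ≤ g3 - g1 * g2)]
      apply Real.sqrt_le_sqrt
      nlinarith [hcs]
    rw [Real.sqrt_mul (by nlinarith : (0:ℝ) ≤ g1^2 - 1)] at h6
    linarith

set_option maxHeartbeats 2000000 in
/-- The rapidity function `d_E(u,v) = tanh⁻¹‖(−u) ⊕_E v‖` is a metric on the open
unit ball `𝔹` of `ℝⁿ`: nonnegative, vanishing exactly on the diagonal, symmetric,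
and satisfying the triangle inequality. -/
theorem rapidity_metric_einstein (n : ℕ)
    (dE : EuclideanSpace ℝ (Fin n) → EuclideanSpace ℝ (Fin n) → ℝ)
    (hdE : ∀ u v, dE u v = artanh ‖einsteinAdd (-u) v‖) :
    (∀ u v : EuclideanSpace ℝ (Fin n), ‖u‖ < 1 → ‖v‖ < 1 → 0 ≤ dE u v) ∧
    (∀ u v : EuclideanSpace ℝ (Fin n), ‖u‖ < 1 → ‖v‖ < 1 → (dE u v = 0 ↔ u = v)) ∧
    (∀ u v : EuclideanSpace ℝ (Fin n), ‖u‖ < 1 → ‖v‖ < 1 → dE u v = dE v u) ∧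
    (∀ u v w : EuclideanSpace ℝ (Fin n), ‖u‖ < 1 → ‖v‖ < 1 → ‖w‖ < 1 →
      dE u w ≤ dE u v + dE v w) := by
  refine ⟨?_, ?_, ?_, ?_⟩
  · intro u v hu hv
    rw [hdE]
    exact artanh_nonneg' (norm_nonneg _) (norm_lt_one_einsteinAdd u v hu hv)
  · intro u v hu hv
    rw [hdE]
    rw [artanh_eq_zero_iff' (norm_nonneg _) (norm_lt_one_einsteinAdd u v hu hv), norm_eq_zero]
    constructor
    · intro h
      have h2 : ‖einsteinAdd (-u) v‖^2 = 0 := by rw [h]; simp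
      rw [norm_sq_einsteinAdd_neg u v hu hv] at h2
      have ha : |⟪u,v⟫| < 1 := inner_lt_one' hu hv
      have ha1 : (1:ℝ) - ⟪u,v⟫ ≠ 0 := by
        have := (abs_lt.mp ha).2; intro hh; linarith
      have h4 : (1-‖u‖^2)*(1-‖v‖^2) / (1-⟪u,v⟫)^2 = 1 := by linarith
      have h5 := (div_eq_one_iff_eq (pow_ne_zero 2 ha1)).mp h4
      exact sq_eq_imp' u v hu hv h5.symm
    · rintro rfl
      have ha : ⟪u,u⟫ = ‖u‖^2 := real_inner_self_eq_norm_sq u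
      have h2 : ‖einsteinAdd (-u) u‖^2 = 0 := by
        rw [norm_sq_einsteinAdd_neg u u hu hu, ha]
        have h0 : (1:ℝ) - ‖u‖^2 ≠ 0 := by nlinarith [norm_nonneg u]
        rw [show (1-‖u‖^2)*(1-‖u‖^2) = (1-‖u‖^2)^2 by ring, div_self (pow_ne_zero 2 h0)]
        ring
      have := pow_eq_zero_iff (n := 2) (by norm_num) |>.mp h2
      rw [norm_eq_zero] at this
      rw [this]
  · intro u v hu hv
    rw [hdE, hdE]
    congr 1
    have h1 := norm_sq_einsteinAdd_neg u v hu hv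
    have h2 := norm_sq_einsteinAdd_neg v u hv hu
    rw [real_inner_comm u v] at h2
    have heq : ‖einsteinAdd (-u) v‖^2 = ‖einsteinAdd (-v) u‖^2 := by
      rw [h1, h2]; ring
    calc ‖einsteinAdd (-u) v‖ = Real.sqrt (‖einsteinAdd (-u) v‖^2) :=
          (Real.sqrt_sq (norm_nonneg _)).symm
      _ = Real.sqrt (‖einsteinAdd (-v) u‖^2) := by rw [heq]
      _ = ‖einsteinAdd (-v) u‖ := Real.sqrt_sq (norm_nonneg _)
  · intro u v w hu hv hw
    rw [hdE, hdE, hdE]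
    set x := ‖einsteinAdd (-u) v‖ with hx
    set y := ‖einsteinAdd (-v) w‖ with hy
    set z := ‖einsteinAdd (-u) w‖ with hz
    have hx0 : 0 ≤ x := norm_nonneg _
    have hy0 : 0 ≤ y := norm_nonneg _
    have hz0 : 0 ≤ z := norm_nonneg _
    have hx1 : x < 1 := norm_lt_one_einsteinAdd u v hu hv
    have hy1 : y < 1 := norm_lt_one_einsteinAdd v w hv hw
    have hz1 : z < 1 := norm_lt_one_einsteinAdd u w hu hw
    set g1 := gE u v with hg1
    set g2 := gE v w with hg2
    set g3 := gE u w with hg3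
    have hg1' : 1 ≤ g1 := gE_one_le u v hu hv
    have hg2' : 1 ≤ g2 := gE_one_le v w hv hw
    have hg3' : 1 ≤ g3 := gE_one_le u w hu hw
    have hx2 : x^2 = 1 - 1/g1^2 := normsq_gE u v hu hv
    have hy2 : y^2 = 1 - 1/g2^2 := normsq_gE v w hv hw
    have hz2 : z^2 = 1 - 1/g3^2 := normsq_gE u w hu hw
    have hg1p : (0:ℝ) < g1 := by linarith
    have hg2p : (0:ℝ) < g2 := by linarith
    have hg3p : (0:ℝ) < g3 := by linarith
    have e1 : Real.sqrt (g1^2 - 1) = g1 * x := by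
      rw [show g1^2 - 1 = (g1*x)^2 by rw [mul_pow, hx2]; field_simp]
      exact Real.sqrt_sq (mul_nonneg (by linarith) hx0)
    have e2 : Real.sqrt (g2^2 - 1) = g2 * y := by
      rw [show g2^2 - 1 = (g2*y)^2 by rw [mul_pow, hy2]; field_simp]
      exact Real.sqrt_sq (mul_nonneg (by linarith) hy0)
    have hS := cosh_tri u v w hu hv hw
    rw [← hg1, ← hg2, ← hg3, e1, e2] at hS
    have hSg : g1 * g2 + g1 * x * (g2 * y) = g1 * g2 * (1 + x*y) := by ring
    rw [hSg] at hS
    clear_value x y z g1 g2 g3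
    clear hx hy hz hg1 hg2 hg3 e1 e2 hSg hdE
    have hxy : (0:ℝ) < 1 + x * y := by
      have := mul_nonneg hx0 hy0; linarith
    set t := (x + y) / (1 + x * y) with ht
    clear_value t
    have ht1 : t < 1 := by
      rw [ht, div_lt_one hxy]
      have := mul_pos (show (0:ℝ) < 1 - x by linarith) (show (0:ℝ) < 1 - y by linarith)
      linarith
    have ht0 : 0 ≤ t := by
      rw [ht]; exact div_nonneg (by linarith) (by linarith)
    have hSpos : 0 < g1 * g2 * (1 + x*y) := mul_pos (mul_pos hg1p hg2p) hxy
    have hx2' : (1 - x^2) * g1^2 = 1 := by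
      rw [hx2]; field_simp [hg1p.ne']; ring
    have hy2' : (1 - y^2) * g2^2 = 1 := by
      rw [hy2]; field_simp [hg2p.ne']; ring
    have e : t * (1 + x*y) = x + y := by
      rw [ht]; exact div_mul_cancel₀ _ hxy.ne'
    have expand : (1 - t^2) * (1 + x*y)^2 = (1 - x^2) * (1 - y^2) := by
      linear_combination (-(t*(1+x*y)+x+y)) * e
    have hmain : (1 - t^2) * (g1 * g2 * (1 + x*y))^2 = 1 := by
      linear_combination g1^2*g2^2 * expand + ((1-y^2)*g2^2) * hx2' + hy2'
    have ht2 : 1 - t^2 = 1/(g1 * g2 * (1 + x*y))^2 := by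
      rw [eq_div_iff (pow_ne_zero 2 hSpos.ne')]
      exact hmain
    have hz_le_t : z ≤ t := by
      have h1 : 1 - z^2 = 1/g3^2 := by rw [hz2]; ring
      have h2 : 1/(g1 * g2 * (1 + x*y))^2 ≤ 1/g3^2 := by
        have hle : g3^2 ≤ (g1*g2*(1+x*y))^2 := pow_le_pow_left₀ (by linarith) hS 2
        have h30 : (0:ℝ) < g3^2 := pow_pos hg3p 2
        exact one_div_le_one_div_of_le h30 hle
      have h3 : z^2 ≤ t^2 := by linarith
      calc z = Real.sqrt (z^2) := (Real.sqrt_sq hz0).symm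
        _ ≤ Real.sqrt (t^2) := Real.sqrt_le_sqrt h3
        _ = t := Real.sqrt_sq ht0
    calc artanh z ≤ artanh t := artanh_mono' hz0 hz_le_t ht1
      _ = artanh x + artanh y := by
          rw [ht]; exact (artanh_add' hx0 hx1 hy0 hy1).symm
end

section
/- Let G be a gyrogroup with a gyronorm and gyronorm metric d(x,y) = ‖⊖x ⊕ y‖. Then the following are equivalent: (I) the commutative-like condition ‖(a ⊕ x) ⊕ gyr[a,x](y ⊖ a)‖ = ‖x ⊕ y‖ holds for all a, x, y ∈ G; (II) d is bi-gyrotranslation invariant, i.e., d(x ⊕ a, y ⊕ a) = d(x, y) = d(a ⊕ x, a ⊕ y) for all a, x, y ∈ G. -/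
/-- A gyrogroup: a set with a binary operation `add`, identity `e`, inversion `neg`,
and gyroautomorphisms `gyr` satisfying the gyrogroup axioms. -/
structure Gyrogroup (G : Type*) where
  add : G → G → G
  e : G
  neg : G → G
  gyr : G → G → G → G
  e_add : ∀ a, add e a = a
  add_e : ∀ a, add a e = a
  neg_add : ∀ a, add (neg a) a = e
  add_neg : ∀ a, add a (neg a) = e
  gyr_bijective : ∀ a b, Function.Bijective (gyr a b)
  gyr_add : ∀ a b x y, gyr a b (add x y) = add (gyr a b x) (gyr a b y)
  left_gyroassoc : ∀ a b c, add a (add b c) = add (add a b) (gyr a b c)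
  left_loop : ∀ a b, gyr (add a b) b = gyr a b

/-- A gyronorm on a gyrogroup. -/
structure Gyronorm {G : Type*} (gg : Gyrogroup G) where
  toFun : G → ℝ
  nonneg : ∀ x, 0 ≤ toFun x
  eq_zero_iff : ∀ x, toFun x = 0 ↔ x = gg.e
  neg_eq : ∀ x, toFun (gg.neg x) = toFun x
  subadd : ∀ x y, toFun (gg.add x y) ≤ toFun x + toFun y
  gyr_eq : ∀ a b x, toFun (gg.gyr a b x) = toFun x

namespace Gyrogroup

variable {G : Type*} (gg : Gyrogroup G)

theorem left_cancel {a b c : G} (h : gg.add a b = gg.add a c) : b = c := by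
  have h2 : gg.add (gg.neg a) (gg.add a b) = gg.add (gg.neg a) (gg.add a c) := by rw [h]
  rw [gg.left_gyroassoc, gg.left_gyroassoc, gg.neg_add, gg.e_add, gg.e_add] at h2
  exact (gg.gyr_bijective _ _).1 h2

theorem gyr_e (a c : G) : gg.gyr gg.e a c = c := by
  have := gg.left_gyroassoc gg.e a c
  rw [gg.e_add, gg.e_add] at this
  exact (gg.left_cancel this).symm

theorem gyr_neg_self (a c : G) : gg.gyr (gg.neg a) a c = c := by
  have := gg.left_loop (gg.neg a) a
  rw [gg.neg_add] at this
  rw [← this, gg.gyr_e]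

theorem neg_add_cancel_left (a b : G) :
    gg.add (gg.neg a) (gg.add a b) = b := by
  rw [gg.left_gyroassoc, gg.neg_add, gg.e_add, gg.gyr_neg_self]

theorem neg_neg (a : G) : gg.neg (gg.neg a) = a := by
  apply gg.left_cancel (a := gg.neg a)
  rw [gg.add_neg, gg.neg_add]

theorem add_neg_cancel_left (a b : G) :
    gg.add a (gg.add (gg.neg a) b) = b := by
  have := gg.neg_add_cancel_left (gg.neg a) b
  rwa [gg.neg_neg] at this

/-- The gyrator identity: `⊖(a⊕b) ⊕ (a⊕(b⊕c)) = gyr[a,b] c`. -/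
theorem gyrator (a b c : G) :
    gg.add (gg.neg (gg.add a b)) (gg.add a (gg.add b c)) = gg.gyr a b c := by
  rw [gg.left_gyroassoc a b c, gg.neg_add_cancel_left]

end Gyrogroup

/-- In a normed gyrogroup, the commutative-like condition
`‖(a ⊕ x) ⊕ gyr[a,x](y ⊖ a)‖ = ‖x ⊕ y‖` is equivalent to bi-gyrotranslation
invariance of the gyronorm metric. -/
theorem commutative_like_iff_bi_invariant {G : Type*} (gg : Gyrogroup G)
    (nm : Gyronorm gg)
    (d : G → G → ℝ) (hd : ∀ x y, d x y = nm.toFun (gg.add (gg.neg x) y)) :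
    (∀ a x y, nm.toFun (gg.add (gg.add a x) (gg.gyr a x (gg.add y (gg.neg a)))) =
        nm.toFun (gg.add x y)) ↔
      (∀ a x y, d (gg.add x a) (gg.add y a) = d x y ∧
        d x y = d (gg.add a x) (gg.add a y)) := by
  -- (I) restated: ‖a ⊕ (x ⊕ (y ⊖ a))‖ = ‖x ⊕ y‖
  have keyI : ∀ a x y,
      nm.toFun (gg.add (gg.add a x) (gg.gyr a x (gg.add y (gg.neg a)))) =
        nm.toFun (gg.add a (gg.add x (gg.add y (gg.neg a)))) := by
    intro a x y
    rw [gg.left_gyroassoc]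
  -- right translation: d (x⊕a) (y⊕a) = ‖⊖a ⊕ (⊖x ⊕ (y⊕a))‖
  have keyR : ∀ a x y,
      d (gg.add x a) (gg.add y a) =
        nm.toFun (gg.add (gg.neg a) (gg.add (gg.neg x) (gg.add y a))) := by
    intro a x y
    rw [hd]
    have h1 : gg.add y a =
        gg.add x (gg.add a (gg.add (gg.neg a) (gg.add (gg.neg x) (gg.add y a)))) := by
      rw [gg.add_neg_cancel_left, gg.add_neg_cancel_left]
    calc nm.toFun (gg.add (gg.neg (gg.add x a)) (gg.add y a))
        = nm.toFun (gg.add (gg.neg (gg.add x a))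
            (gg.add x (gg.add a (gg.add (gg.neg a) (gg.add (gg.neg x) (gg.add y a)))))) := by
          rw [← h1]
      _ = nm.toFun (gg.gyr x a (gg.add (gg.neg a) (gg.add (gg.neg x) (gg.add y a)))) := by
          rw [gg.gyrator]
      _ = nm.toFun (gg.add (gg.neg a) (gg.add (gg.neg x) (gg.add y a))) := nm.gyr_eq _ _ _
  -- left translation invariance always holds
  have keyL : ∀ a x y, d x y = d (gg.add a x) (gg.add a y) := by
    intro a x y
    rw [hd, hd]
    have h1 : gg.add a y = gg.add a (gg.add x (gg.add (gg.neg x) y)) := by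
      rw [gg.add_neg_cancel_left]
    rw [h1, gg.gyrator, nm.gyr_eq]
  constructor
  · intro hI a x y
    refine ⟨?_, keyL a x y⟩
    rw [keyR, hd]
    have := (keyI (gg.neg a) (gg.neg x) y).symm.trans
      (hI (gg.neg a) (gg.neg x) y)
    rwa [gg.neg_neg] at this
  · intro hB a x y
    rw [keyI]
    have := ((hB (gg.neg a) (gg.neg x) y).1).symm
    rw [keyR, hd, gg.neg_neg, gg.neg_neg] at this
    exact this.symm
end
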